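/- For every odd integer k ≥ 1, lcm(A(2k,1), A'(2k,1)) = (1/2) F_{k+2} F_{k+1} F_{k−1} L_{k+1} L_k, where A(m,1) := ∑_{n=1}^{F_m − 1} ⌊φ n⌋ and A'(m,1) := ∑_{n=1}^{F_m − 1} ⌊φ² n⌋. -/

import Mathlib

def lucas : ℕ → ℕ
  | 0 => 2
  | 1 => 1
  | n + 2 => lucas (n + 1) + lucas n

noncomputable def A (m : ℕ) : ℤ := ∑ n ∈ Finset.Icc 1 (Nat.fib m - 1), ⌊(1 + Real.sqrt 5) / 2 * (n : ℝ)⌋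

noncomputable def A' (m : ℕ) : ℤ :=
  ∑ n ∈ Finset.Icc 1 (Nat.fib m - 1), ⌊((1 + Real.sqrt 5) / 2) ^ 2 * (n : ℝ)⌋

open Real

section Aux

lemma lucas_aux : ∀ n, lucas (n+1) = Nat.fib n + Nat.fib (n+2)
  | 0 => rfl
  | 1 => rfl
  | n+2 => by
      show lucas (n+2) + lucas (n+1) = _
      rw [lucas_aux (n+1), lucas_aux n, Nat.fib_add_two (n := n+2), Nat.fib_add_two (n := n+1),
        Nat.fib_add_two (n := n)]
      ring

lemma fibz (n : ℕ) : (Nat.fib (n+2) : ℤ) = Nat.fib n + Nat.fib (n+1) := by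
  rw [Nat.fib_add_two]; push_cast; ring

lemma cassini_aux (n : ℕ) : ((Nat.fib (n+1) : ℤ))^2 - Nat.fib n * Nat.fib (n+2) = (-1)^n := by
  induction n with
  | zero => simp
  | succ n ih =>
    rw [show n+1+1 = n+2 from rfl, show n+1+2 = (n+1)+2 from rfl, fibz (n+1), fibz n]
    rw [fibz n] at ih
    linear_combination -ih

lemma catalan_aux (n : ℕ) : ((Nat.fib (n+1) : ℤ)) * Nat.fib (n+2) - Nat.fib n * Nat.fib (n+3) = (-1)^n := by
  induction n with
  | zero => simp
  | succ n ih =>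
    rw [show n+1+2 = (n+1)+2 from rfl, show n+1+3 = (n+2)+2 from rfl, fibz (n+1), fibz (n+2),
      fibz (n+1), show n+1+1 = n+2 from rfl, fibz n]
    rw [show n+3 = (n+1)+2 from rfl, fibz (n+1), show n+1+1 = n+2 from rfl, fibz n] at ih
    linear_combination -ih

lemma I1 (j : ℕ) : Nat.fib (4*j+2) = lucas (2*j+2) * Nat.fib (2*j) + 1 := by
  have hadd := Nat.fib_add (2*j) (2*j+1)
  have hc := catalan_aux (2*j)
  rw [lucas_aux (2*j+1)]
  have : (-1 : ℤ)^(2*j) = 1 := by simp [pow_mul]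
  rw [this] at hc
  have hz : (Nat.fib (4*j+2) : ℤ) = (Nat.fib (2*j+1) + Nat.fib (2*j+3)) * Nat.fib (2*j) + 1 := by
    rw [show 4*j+2 = 2*j + (2*j+1) + 1 by ring, hadd]
    push_cast
    rw [show 2*j+1+1 = 2*j+2 by ring]
    linear_combination hc
  exact_mod_cast hz

lemma I2 (j : ℕ) : Nat.fib (4*j+3) = Nat.fib (2*j+2) * lucas (2*j+1) + 1 := by
  have hadd := Nat.fib_add (2*j+1) (2*j+1)
  have hc := cassini_aux (2*j)
  rw [lucas_aux (2*j)]
  have : (-1 : ℤ)^(2*j) = 1 := by simp [pow_mul]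
  rw [this] at hc
  have hz : (Nat.fib (4*j+3) : ℤ) = Nat.fib (2*j+2) * (Nat.fib (2*j) + Nat.fib (2*j+2)) + 1 := by
    rw [show 4*j+3 = (2*j+1) + (2*j+1) + 1 by ring, hadd]
    push_cast
    rw [show 2*j+1+1 = 2*j+2 by ring]
    linear_combination hc
  exact_mod_cast hz

lemma I3 (j : ℕ) : Nat.fib (4*j+4) = Nat.fib (2*j+3) * lucas (2*j+1) + 1 := by
  have hadd := Nat.fib_add (2*j+1) (2*j+2)
  have hc := catalan_aux (2*j)
  rw [lucas_aux (2*j)]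
  have : (-1 : ℤ)^(2*j) = 1 := by simp [pow_mul]
  rw [this] at hc
  have hz : (Nat.fib (4*j+4) : ℤ) = Nat.fib (2*j+3) * (Nat.fib (2*j) + Nat.fib (2*j+2)) + 1 := by
    rw [show 4*j+4 = (2*j+1) + (2*j+2) + 1 by ring, hadd]
    push_cast
    rw [show 2*j+1+1 = 2*j+2 by ring, show 2*j+2+1 = 2*j+3 by ring]
    linear_combination hc
  exact_mod_cast hz

lemma sqrt5_pos : (0:ℝ) < Real.sqrt 5 := Real.sqrt_pos.2 (by norm_num)
lemma sqrt5_sq : Real.sqrt 5 ^ 2 = 5 := Real.sq_sqrt (by norm_num)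
lemma sqrt5_gt : (2:ℝ) < Real.sqrt 5 := by
  nlinarith [sqrt5_sq, sqrt5_pos]

lemma gold_approx (m : ℕ) (hm : 1 ≤ m) (n p : ℤ) (hn1 : 1 ≤ n)
    (hn2 : (n : ℝ) ≤ (Nat.fib m : ℝ) - 1) :
    (-goldenConj)^m < |(n:ℝ) * goldenRatio - p| := by
  by_contra hcon
  push_neg at hcon
  set c : ℝ := (-goldenConj)^m with hc
  have hψ : -goldenConj = (Real.sqrt 5 - 1)/2 := by
    rw [goldenConj]; ring
  have hψpos : (0:ℝ) < -goldenConj := by rw [hψ]; nlinarith [sqrt5_gt]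
  have hψlt : -goldenConj < 1 := by rw [hψ]; nlinarith [sqrt5_sq, sqrt5_pos]
  have hc0 : 0 < c := pow_pos hψpos m
  have hcle : c ≤ -goldenConj := by
    rw [hc]
    calc (-goldenConj)^m ≤ (-goldenConj)^1 :=
          pow_le_pow_of_le_one (le_of_lt hψpos) (le_of_lt hψlt) hm
    _ = -goldenConj := pow_one _
  have hinv : goldenRatio⁻¹ = -goldenConj := inv_goldenRatio
  have hcφ : c * goldenRatio^m = 1 := by
    rw [hc, ← hinv, ← mul_pow, inv_mul_cancel₀ goldenRatio_ne_zero, one_pow]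
  have hn0 : n ≠ 0 := by omega
  set q : ℤ := p^2 - p*n - n^2 with hqdef
  have expand : ((p:ℝ) - n*goldenRatio) * ((p:ℝ) - n*goldenConj) = (q:ℤ) := by
    rw [hqdef]
    push_cast
    linear_combination (n:ℝ)^2 * goldenRatio_mul_goldenConj - ((p:ℝ)*(n:ℝ)) * goldenRatio_add_goldenConj
  have hq : q ≠ 0 := by
    intro h0
    rw [h0] at expand
    push_cast at expand
    rcases mul_eq_zero.1 expand with h | h
    · exact (goldenRatio_irrational.intCast_mul hn0).ne_int p (by linarith)
    · exact (goldenConj_irrational.intCast_mul hn0).ne_int p (by linarith)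
  have one_le : (1:ℝ) ≤ |(q:ℝ)| := by
    have := Int.one_le_abs hq
    exact_mod_cast this
  have key : |(q:ℝ)| = |(p:ℝ) - n*goldenRatio| * |(p:ℝ) - n*goldenConj| := by
    rw [← abs_mul, expand]
  have habs1 : |(p:ℝ) - n*goldenRatio| ≤ c := by
    rwa [abs_sub_comm] at hcon
  have hsplit : (p:ℝ) - n*goldenConj = ((p:ℝ) - n*goldenRatio) + n * Real.sqrt 5 := by
    rw [← goldenRatio_sub_goldenConj]; ring
  have hfib : (Nat.fib m : ℝ) * Real.sqrt 5 = goldenRatio^m - goldenConj^m := by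
    rw [Real.coe_fib_eq m]
    field_simp
  have habs2 : |(p:ℝ) - n*goldenConj| ≤ c + (goldenRatio^m - goldenConj^m - Real.sqrt 5) := by
    rw [hsplit]
    refine le_trans (abs_add_le _ _) ?_
    have h1 : |(n:ℝ) * Real.sqrt 5| = (n:ℝ) * Real.sqrt 5 := by
      rw [abs_of_nonneg]
      have : (0:ℝ) ≤ (n:ℝ) := by exact_mod_cast le_of_lt (by omega : (0:ℤ) < n)
      positivity
    rw [h1]
    have h2 : (n:ℝ) * Real.sqrt 5 ≤ ((Nat.fib m : ℝ) - 1) * Real.sqrt 5 :=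
      mul_le_mul_of_nonneg_right hn2 (le_of_lt sqrt5_pos)
    nlinarith [hfib]
  have hψmabs : -goldenConj^m ≤ c := by
    have : |goldenConj^m| = c := by
      rw [abs_pow, abs_of_neg goldenConj_neg, hc]
    linarith [neg_abs_le (goldenConj^m)]
  have chain : (1:ℝ) ≤ c * (c + (goldenRatio^m - goldenConj^m - Real.sqrt 5)) := by
    calc (1:ℝ) ≤ |(q:ℝ)| := one_le
    _ = |(p:ℝ) - n*goldenRatio| * |(p:ℝ) - n*goldenConj| := key
    _ ≤ c * (c + (goldenRatio^m - goldenConj^m - Real.sqrt 5)) := by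
        apply mul_le_mul habs1 habs2 (abs_nonneg _) (le_of_lt hc0)
  have expand2 : c * (c + (goldenRatio^m - goldenConj^m - Real.sqrt 5))
      = c^2 + 1 - c * goldenConj^m - Real.sqrt 5 * c := by
    linear_combination hcφ
  have h3 : c * (-goldenConj^m) ≤ c * c := mul_le_mul_of_nonneg_left hψmabs (le_of_lt hc0)
  have h4 : c * c ≤ c * (-goldenConj) := mul_le_mul_of_nonneg_left hcle (le_of_lt hc0)
  have h5 : (2:ℝ) * (-goldenConj) = Real.sqrt 5 - 1 := by rw [hψ]; ring
  nlinarith [chain, expand2, h3, h4, h5, hc0]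

lemma pair_floor (m : ℕ) (hm : 1 ≤ m) (n : ℕ) (h1 : 1 ≤ n) (h2 : n + 1 ≤ Nat.fib m) :
    ⌊goldenRatio * (n:ℝ)⌋ + ⌊goldenRatio * ((Nat.fib m - n : ℕ) : ℝ)⌋ = (Nat.fib (m+1) : ℤ) - 1 := by
  set N := Nat.fib m with hN
  set x : ℝ := goldenRatio * n with hx
  set f : ℤ := ⌊x⌋ with hf
  have hcast : ((N - n : ℕ) : ℝ) = (N:ℝ) - n := by
    have : n ≤ N := by omega
    push_cast [this]
    ring
  have hφN : goldenRatio * (N:ℝ) = (Nat.fib (m+1) : ℝ) - goldenConj^m := by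
    have := fib_succ_sub_goldenRatio_mul_fib m
    rw [hN]
    linarith
  have hfle : (f:ℝ) ≤ x := Int.floor_le x
  have hflt : x < f + 1 := Int.lt_floor_add_one x
  have hrn2 : ((n:ℤ) : ℝ) ≤ (Nat.fib m : ℝ) - 1 := by
    push_cast
    have : (n:ℝ) + 1 ≤ (N:ℝ) := by exact_mod_cast h2
    linarith
  have hn1' : (1:ℤ) ≤ (n:ℤ) := by exact_mod_cast h1
  have ha1 : (-goldenConj)^m < x - f := by
    have h := gold_approx m hm n f hn1' hrn2
    push_cast at h
    rw [show (n:ℝ) * goldenRatio = x by rw [hx]; ring] at h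
    rwa [abs_of_nonneg (by linarith : (0:ℝ) ≤ x - f)] at h
  have ha2 : (-goldenConj)^m < (f+1) - x := by
    have h := gold_approx m hm n (f+1) hn1' hrn2
    push_cast at h
    rw [show (n:ℝ) * goldenRatio = x by rw [hx]; ring] at h
    rwa [abs_of_nonpos (by linarith : x - ((f:ℝ)+1) ≤ 0), neg_sub] at h
  have hcabs : |goldenConj^m| = (-goldenConj)^m := by
    rw [abs_pow, abs_of_neg goldenConj_neg]
  have h2nd : ⌊goldenRatio * ((N - n : ℕ) : ℝ)⌋ = (Nat.fib (m+1) : ℤ) - 1 - f := by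
    rw [Int.floor_eq_iff]
    constructor
    · push_cast
      rw [hcast, mul_sub, hφN]
      have : goldenConj^m ≤ (-goldenConj)^m := le_trans (le_abs_self _) (le_of_eq hcabs)
      linarith
    · push_cast
      rw [hcast, mul_sub, hφN]
      have : -(-goldenConj)^m ≤ goldenConj^m := by
        rw [← hcabs]; exact neg_abs_le _
      linarith
  rw [h2nd]
  ring

lemma A_eval (m : ℕ) (hm : 1 ≤ m) :
    2 * (∑ n ∈ Finset.Icc 1 (Nat.fib m - 1), ⌊goldenRatio * (n:ℝ)⌋)
      = ((Nat.fib m : ℤ) - 1) * ((Nat.fib (m+1) : ℤ) - 1) := by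
  have hN1 : 1 ≤ Nat.fib m := Nat.fib_pos.mpr hm
  have hrefl : ∑ n ∈ Finset.Icc 1 (Nat.fib m - 1), ⌊goldenRatio * (n:ℝ)⌋
      = ∑ n ∈ Finset.Icc 1 (Nat.fib m - 1), ⌊goldenRatio * ((Nat.fib m - n : ℕ):ℝ)⌋ := by
    apply Finset.sum_nbij' (i := fun n => Nat.fib m - n) (j := fun n => Nat.fib m - n)
    all_goals intro a ha
    all_goals simp only [Finset.mem_Icc] at *
    · omega
    · omega
    · omega
    · omega
    · have h3 : Nat.fib m - (Nat.fib m - a) = a := by omega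
      rw [h3]
  have hsum : 2 * (∑ n ∈ Finset.Icc 1 (Nat.fib m - 1), ⌊goldenRatio * (n:ℝ)⌋)
      = ∑ n ∈ Finset.Icc 1 (Nat.fib m - 1),
          (⌊goldenRatio * (n:ℝ)⌋ + ⌊goldenRatio * ((Nat.fib m - n : ℕ):ℝ)⌋) := by
    rw [Finset.sum_add_distrib, ← hrefl]
    ring
  have key : ∀ n ∈ Finset.Icc 1 (Nat.fib m - 1),
      ⌊goldenRatio * (n:ℝ)⌋ + ⌊goldenRatio * ((Nat.fib m - n : ℕ):ℝ)⌋
        = (Nat.fib (m+1) : ℤ) - 1 := by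
    intro n hn
    simp only [Finset.mem_Icc] at hn
    exact pair_floor m hm n hn.1 (by omega)
  rw [hsum, Finset.sum_congr rfl key, Finset.sum_const, Nat.card_Icc, nsmul_eq_mul]
  have hcard : (Nat.fib m - 1 + 1 - 1) = Nat.fib m - 1 := by omega
  rw [hcard, Nat.cast_sub hN1]
  push_cast
  ring

lemma gauss (N : ℕ) (hN : 1 ≤ N) :
    2 * (∑ n ∈ Finset.Icc 1 (N - 1), (n:ℤ)) = (N:ℤ) * ((N:ℤ) - 1) := by
  have hsub : Finset.Icc 1 (N-1) ⊆ Finset.range N := by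
    intro x hx
    simp only [Finset.mem_Icc] at hx
    simp only [Finset.mem_range]
    omega
  have h0 : ∑ n ∈ Finset.Icc 1 (N-1), (n:ℤ) = ∑ n ∈ Finset.range N, (n:ℤ) := by
    apply Finset.sum_subset hsub
    intro x hx hnx
    simp only [Finset.mem_Icc, Finset.mem_range] at *
    have : x = 0 := by omega
    simp [this]
  rw [h0]
  have hz := Finset.sum_range_id_mul_two N
  zify [hN] at hz
  linarith

lemma A'_of_A (m : ℕ) :
    (∑ n ∈ Finset.Icc 1 (Nat.fib m - 1), ⌊goldenRatio^2 * (n:ℝ)⌋)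
      = (∑ n ∈ Finset.Icc 1 (Nat.fib m - 1), ⌊goldenRatio * (n:ℝ)⌋)
        + ∑ n ∈ Finset.Icc 1 (Nat.fib m - 1), (n:ℤ) := by
  rw [← Finset.sum_add_distrib]
  apply Finset.sum_congr rfl
  intro n _
  rw [goldenRatio_sq]
  have : (goldenRatio + 1) * (n:ℝ) = goldenRatio * (n:ℝ) + ((n:ℤ):ℝ) := by push_cast; ring
  rw [this, Int.floor_add_intCast]

lemma A_gold (m : ℕ) : A m = ∑ n ∈ Finset.Icc 1 (Nat.fib m - 1), ⌊goldenRatio * (n:ℝ)⌋ := rfl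

lemma A'_gold (m : ℕ) : A' m = ∑ n ∈ Finset.Icc 1 (Nat.fib m - 1), ⌊goldenRatio^2 * (n:ℝ)⌋ := rfl

end Aux

theorem lcm_A_odd (k : ℕ) (hk : 1 ≤ k) (hko : Odd k) :
    (Int.lcm (A (2 * k)) (A' (2 * k)) : ℝ) =
      (1 / 2) * (Nat.fib (k + 2) : ℝ) * (Nat.fib (k + 1) : ℝ) * (Nat.fib (k - 1) : ℝ) *
        (lucas (k + 1) : ℝ) * (lucas k : ℝ) := by
  obtain ⟨j, hj⟩ := hko
  have hm : 1 ≤ 2 * k := by omega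
  have hN1 : 1 ≤ Nat.fib (2*k) := Nat.fib_pos.mpr hm
  -- closed forms
  have hA : 2 * A (2*k) = ((Nat.fib (2*k) : ℤ) - 1) * ((Nat.fib (2*k+1) : ℤ) - 1) := by
    rw [A_gold]
    exact A_eval (2*k) hm
  have hA' : 2 * A' (2*k) = ((Nat.fib (2*k) : ℤ) - 1) * ((Nat.fib (2*k+2) : ℤ) - 1) := by
    rw [A'_gold, A'_of_A, show (2*k+2) = (2*k)+2 from rfl, fibz (2*k)]
    have hg := gauss (Nat.fib (2*k)) hN1
    linear_combination A_eval (2*k) hm + hg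
  -- Fibonacci/Lucas identities
  have e1 : (Nat.fib (2*k) : ℤ) - 1 = (lucas (k+1) : ℤ) * (Nat.fib (k-1) : ℤ) := by
    have := I1 j
    rw [show 4*j+2 = 2*k by omega, show 2*j+2 = k+1 by omega, show 2*j = k-1 by omega] at this
    push_cast [this]
    ring
  have e2 : (Nat.fib (2*k+1) : ℤ) - 1 = (Nat.fib (k+1) : ℤ) * (lucas k : ℤ) := by
    have := I2 j
    rw [show 4*j+3 = 2*k+1 by omega, show 2*j+2 = k+1 by omega, show 2*j+1 = k by omega] at this
    push_cast [this]
    ring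
  have e3 : (Nat.fib (2*k+2) : ℤ) - 1 = (Nat.fib (k+2) : ℤ) * (lucas k : ℤ) := by
    have := I3 j
    rw [show 4*j+4 = 2*k+2 by omega, show 2*j+3 = k+2 by omega, show 2*j+1 = k by omega] at this
    push_cast [this]
    ring
  set c : ℕ := Nat.fib (k-1) * lucas (k+1) * lucas k with hcdef
  have hA2 : 2 * A (2*k) = ((c * Nat.fib (k+1) : ℕ) : ℤ) := by
    rw [hA, e1, e2, hcdef]
    push_cast
    ring
  have hA'2 : 2 * A' (2*k) = ((c * Nat.fib (k+2) : ℕ) : ℤ) := by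
    rw [hA', e1, e3, hcdef]
    push_cast
    ring
  -- natAbs
  have n1 : 2 * (A (2*k)).natAbs = c * Nat.fib (k+1) := by
    have := congrArg Int.natAbs hA2
    simpa [Int.natAbs_mul] using this
  have n2 : 2 * (A' (2*k)).natAbs = c * Nat.fib (k+2) := by
    have := congrArg Int.natAbs hA'2
    simpa [Int.natAbs_mul] using this
  -- lcm computation in ℕ
  have hlcm : 2 * Int.lcm (A (2*k)) (A' (2*k)) = c * (Nat.fib (k+1) * Nat.fib (k+2)) := by
    rw [Int.lcm_def]
    calc 2 * Nat.lcm (A (2*k)).natAbs (A' (2*k)).natAbs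
        = Nat.lcm (2 * (A (2*k)).natAbs) (2 * (A' (2*k)).natAbs) := (Nat.lcm_mul_left _ _ _).symm
      _ = Nat.lcm (c * Nat.fib (k+1)) (c * Nat.fib (k+2)) := by rw [n1, n2]
      _ = c * Nat.lcm (Nat.fib (k+1)) (Nat.fib (k+2)) := Nat.lcm_mul_left _ _ _
      _ = c * (Nat.fib (k+1) * Nat.fib (k+2)) := by
          rw [(Nat.fib_coprime_fib_succ (k+1)).lcm_eq_mul]
  -- conclude over ℝ
  have hreal : (2 : ℝ) * (Int.lcm (A (2*k)) (A' (2*k)) : ℕ) =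
      ((c * (Nat.fib (k+1) * Nat.fib (k+2)) : ℕ) : ℝ) := by
    exact_mod_cast congrArg (fun t : ℕ => (t : ℝ)) hlcm
  rw [hcdef] at hreal
  push_cast at hreal
  linarith
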